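/- Generating-function identity for the rectangular rational triangle: Let a_1, a_2, c_1, c_2 be positive integers and t_1, t_2, t_3 integers. Set e_j = (⌊(t_j − 1)/a_j⌋ + 1)·c_j for j = 1, 2, and suppose N := t_3 − e_1 − e_2 ≥ 0. Then the number of pairs (m_1, m_2) ∈ ℤ² with a_1 m_1 ≥ t_1, a_2 m_2 ≥ t_2, and c_1 m_1 + c_2 m_2 ≤ t_3 equals the coefficient of X^N in the formal power series (1 − X^{c_1})^{−1} (1 − X^{c_2})^{−1} (1 − X)^{−1} over ℚ. -/

import Mathlib

open PowerSeries Finset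

lemma geom_inv (c : ℕ) (hc : 0 < c) :
    ((1 - PowerSeries.X ^ c : ℚ⟦X⟧))⁻¹
      = PowerSeries.mk (fun n => if c ∣ n then (1 : ℚ) else 0) := by
  symm
  rw [PowerSeries.eq_inv_iff_mul_eq_one]
  · ext n
    rw [mul_sub, mul_one, map_sub, PowerSeries.coeff_mul_X_pow']
    simp only [coeff_mk, coeff_one]
    rcases Nat.eq_zero_or_pos n with rfl | hn
    · simp [Nat.not_succ_le_zero, hc.ne', Nat.le_zero, dvd_zero]
    · have hne : ¬ n = 0 := hn.ne'
      simp only [hne, if_false]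
      by_cases hle : c ≤ n
      · have hiff : c ∣ n ↔ c ∣ n - c := by
          constructor
          · intro h; exact (Nat.dvd_sub h dvd_rfl)
          · intro h; have := Nat.dvd_add h dvd_rfl
            rwa [Nat.sub_add_cancel hle] at this
        simp only [if_pos hle, hiff, sub_self]
      · have hnd : ¬ c ∣ n := by
          intro h
          have := Nat.le_of_dvd hn h
          omega
        simp [hle, hnd]
  · simp [hc.ne']

theorem rectangular_triangle_generating_function
    (a₁ a₂ c₁ c₂ : ℕ) (ha₁ : 0 < a₁) (ha₂ : 0 < a₂) (hc₁ : 0 < c₁) (hc₂ : 0 < c₂)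
    (t₁ t₂ t₃ : ℤ)
    (e₁ e₂ : ℤ)
    (he₁ : e₁ = (⌊((t₁ : ℚ) - 1) / (a₁ : ℚ)⌋ + 1) * c₁)
    (he₂ : e₂ = (⌊((t₂ : ℚ) - 1) / (a₂ : ℚ)⌋ + 1) * c₂)
    (hN : 0 ≤ t₃ - e₁ - e₂) :
    ({p : ℤ × ℤ | t₁ ≤ (a₁ : ℤ) * p.1 ∧ t₂ ≤ (a₂ : ℤ) * p.2 ∧
        (c₁ : ℤ) * p.1 + (c₂ : ℤ) * p.2 ≤ t₃}.ncard : ℚ)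
      = PowerSeries.coeff (R := ℚ) (t₃ - e₁ - e₂).toNat
          ((1 - PowerSeries.X ^ c₁)⁻¹ * (1 - PowerSeries.X ^ c₂)⁻¹
            * (1 - PowerSeries.X)⁻¹) := by
  set N : ℕ := (t₃ - e₁ - e₂).toNat with hNdef
  have hNcast : (N : ℤ) = t₃ - e₁ - e₂ := Int.toNat_of_nonneg hN
  set b₁ : ℤ := ⌊((t₁ : ℚ) - 1) / (a₁ : ℚ)⌋ + 1 with hb₁
  set b₂ : ℤ := ⌊((t₂ : ℚ) - 1) / (a₂ : ℚ)⌋ + 1 with hb₂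
  -- key inequality characterization
  have hiff : ∀ (a : ℕ), 0 < a → ∀ (t m : ℤ),
      (t ≤ (a : ℤ) * m ↔ ⌊((t : ℚ) - 1) / (a : ℚ)⌋ + 1 ≤ m) := by
    intro a ha t m
    rw [Int.add_one_le_iff, Int.floor_lt,
      div_lt_iff₀ (by exact_mod_cast ha : (0:ℚ) < (a:ℚ))]
    rw [show ((t:ℚ) - 1) = ((t - 1 : ℤ) : ℚ) by push_cast; ring,
      show ((m:ℚ) * (a:ℚ)) = (((a : ℤ) * m : ℤ) : ℚ) by push_cast; ring,
      Int.cast_lt]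
    omega
  have hc₁' : (1:ℤ) ≤ (c₁ : ℤ) := by exact_mod_cast hc₁
  have hc₂' : (1:ℤ) ≤ (c₂ : ℤ) := by exact_mod_cast hc₂
  -- the finite index set
  set T : Finset (ℕ × ℕ) :=
    (Finset.range (N+1) ×ˢ Finset.range (N+1)).filter
      (fun k => c₁ * k.1 + c₂ * k.2 ≤ N) with hT
  -- Step 1: the set equals the image of T
  have hset : {p : ℤ × ℤ | t₁ ≤ (a₁ : ℤ) * p.1 ∧ t₂ ≤ (a₂ : ℤ) * p.2 ∧
        (c₁ : ℤ) * p.1 + (c₂ : ℤ) * p.2 ≤ t₃}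
      = (fun k : ℕ × ℕ => ((b₁ + k.1 : ℤ), (b₂ + k.2 : ℤ))) '' (T : Set (ℕ × ℕ)) := by
    ext p
    simp only [Set.mem_setOf_eq, Set.mem_image, Finset.mem_coe, hT, Finset.mem_filter,
      Finset.mem_product, Finset.mem_range]
    constructor
    · rintro ⟨h1, h2, h3⟩
      have hb1 : b₁ ≤ p.1 := (hiff a₁ ha₁ t₁ p.1).mp h1
      have hb2 : b₂ ≤ p.2 := (hiff a₂ ha₂ t₂ p.2).mp h2
      have hk1 : ((p.1 - b₁).toNat : ℤ) = p.1 - b₁ := Int.toNat_of_nonneg (by omega)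
      have hk2 : ((p.2 - b₂).toNat : ℤ) = p.2 - b₂ := Int.toNat_of_nonneg (by omega)
      have hsum : (c₁ : ℤ) * (p.1 - b₁) + (c₂ : ℤ) * (p.2 - b₂) ≤ (N : ℤ) := by
        rw [hNcast, he₁, he₂]; ring_nf; ring_nf at h3; linarith
      have hm1 : (p.1 - b₁) ≤ (c₁ : ℤ) * (p.1 - b₁) :=
        le_mul_of_one_le_left (by omega) hc₁'
      have hm2 : (p.2 - b₂) ≤ (c₂ : ℤ) * (p.2 - b₂) :=
        le_mul_of_one_le_left (by omega) hc₂'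
      have hpos1 : (0:ℤ) ≤ (c₁ : ℤ) * (p.1 - b₁) :=
        mul_nonneg (by positivity) (by omega)
      have hpos2 : (0:ℤ) ≤ (c₂ : ℤ) * (p.2 - b₂) :=
        mul_nonneg (by positivity) (by omega)
      refine ⟨((p.1 - b₁).toNat, (p.2 - b₂).toNat), ⟨⟨?_, ?_⟩, ?_⟩, ?_⟩
      · omega
      · omega
      · zify
        rw [hk1, hk2]
        linarith
      · obtain ⟨p1, p2⟩ := p
        simp only [Prod.mk.injEq]
        simp only at hk1 hk2 hb1 hb2
        constructor <;> omega
    · rintro ⟨k, ⟨⟨_, _⟩, hk3⟩, rfl⟩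
      have h1 : t₁ ≤ (a₁ : ℤ) * (b₁ + k.1) := (hiff a₁ ha₁ t₁ _).mpr (by omega)
      have h2 : t₂ ≤ (a₂ : ℤ) * (b₂ + k.2) := (hiff a₂ ha₂ t₂ _).mpr (by omega)
      refine ⟨h1, h2, ?_⟩
      have hk3' : ((c₁ * k.1 + c₂ * k.2 : ℕ) : ℤ) ≤ (N : ℤ) := by exact_mod_cast hk3
      rw [hNcast, he₁, he₂] at hk3'
      push_cast at hk3'
      ring_nf; ring_nf at hk3'; linarith
  -- Step 2: ncard = T.card
  have hinj : Function.Injective (fun k : ℕ × ℕ => ((b₁ + k.1 : ℤ), (b₂ + k.2 : ℤ))) := by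
    rintro ⟨x1, x2⟩ ⟨y1, y2⟩ h
    simp only [Prod.mk.injEq] at h
    obtain ⟨h1, h2⟩ := h
    simp only [Prod.mk.injEq]
    constructor <;> omega
  have hcard : ({p : ℤ × ℤ | t₁ ≤ (a₁ : ℤ) * p.1 ∧ t₂ ≤ (a₂ : ℤ) * p.2 ∧
        (c₁ : ℤ) * p.1 + (c₂ : ℤ) * p.2 ≤ t₃}).ncard = T.card := by
    rw [hset, Set.ncard_image_of_injective _ hinj, Set.ncard_coe_finset]
  -- Step 3: coefficient computation
  have hX : (1 - PowerSeries.X : ℚ⟦X⟧)⁻¹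
      = PowerSeries.mk (fun n => if 1 ∣ n then (1:ℚ) else 0) := by
    rw [← pow_one (PowerSeries.X : ℚ⟦X⟧)]; exact geom_inv 1 one_pos
  rw [geom_inv c₁ hc₁, geom_inv c₂ hc₂, hX, hcard]
  have hcoeff : (PowerSeries.coeff (R := ℚ) N)
      (PowerSeries.mk (fun n => if c₁ ∣ n then (1:ℚ) else 0) *
       PowerSeries.mk (fun n => if c₂ ∣ n then (1:ℚ) else 0) *
       PowerSeries.mk (fun n => if 1 ∣ n then (1:ℚ) else 0))
      = ∑ m ∈ Finset.range (N+1), ∑ i ∈ Finset.range (m+1),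
          (if c₁ ∣ i ∧ c₂ ∣ (m - i) then (1:ℚ) else 0) := by
    rw [PowerSeries.coeff_mul, Finset.Nat.sum_antidiagonal_eq_sum_range_succ_mk]
    refine Finset.sum_congr rfl fun m hm => ?_
    simp only [coeff_mk, one_dvd, if_true, mul_one]
    rw [PowerSeries.coeff_mul, Finset.Nat.sum_antidiagonal_eq_sum_range_succ_mk]
    refine Finset.sum_congr rfl fun i hi => ?_
    simp only [coeff_mk]
    split_ifs <;> simp_all
  rw [hcoeff]
  rw [Finset.sum_sigma']
  rw [Finset.sum_boole]
  congr 1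
  rw [hT]
  refine Finset.card_nbij' (fun k => ⟨c₁ * k.1 + c₂ * k.2, c₁ * k.1⟩)
    (fun x => (x.2 / c₁, (x.1 - x.2) / c₂)) ?_ ?_ ?_ ?_
  · rintro ⟨k1, k2⟩ hk
    simp only [Finset.mem_coe, Finset.mem_filter, Finset.mem_product, Finset.mem_range] at hk
    simp only [Finset.mem_coe, Finset.mem_filter, Finset.mem_sigma, Finset.mem_range]
    refine ⟨⟨by omega, by omega⟩, Dvd.intro k1 rfl, ⟨k2, by omega⟩⟩
  · rintro ⟨m, i⟩ hx
    simp only [Finset.mem_coe, Finset.mem_filter, Finset.mem_sigma, Finset.mem_range] at hx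
    obtain ⟨⟨hm, hi⟩, hd1, hd2⟩ := hx
    simp only [Finset.mem_coe, Finset.mem_filter, Finset.mem_product, Finset.mem_range]
    have h1 : c₁ * (i / c₁) = i := Nat.mul_div_cancel' hd1
    have h2 : c₂ * ((m - i) / c₂) = m - i := Nat.mul_div_cancel' hd2
    have hdiv1 : i / c₁ ≤ i := Nat.div_le_self _ _
    have hdiv2 : (m - i) / c₂ ≤ m - i := Nat.div_le_self _ _
    refine ⟨⟨by omega, by omega⟩, by omega⟩
  · rintro ⟨k1, k2⟩ hk
    simp only [Nat.add_sub_cancel_left]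
    rw [Nat.mul_div_cancel_left _ hc₁, Nat.mul_div_cancel_left _ hc₂]
  · rintro ⟨m, i⟩ hx
    simp only [Finset.mem_coe, Finset.mem_filter, Finset.mem_sigma, Finset.mem_range] at hx
    obtain ⟨⟨hm, hi⟩, hd1, hd2⟩ := hx
    have h1 : c₁ * (i / c₁) = i := Nat.mul_div_cancel' hd1
    have h2 : c₂ * ((m - i) / c₂) = m - i := Nat.mul_div_cancel' hd2
    show (⟨c₁ * (i / c₁) + c₂ * ((m - i) / c₂), c₁ * (i / c₁)⟩ : (_ : ℕ) × ℕ) = ⟨m, i⟩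
    rw [h1, h2, Nat.add_sub_cancel' (by omega : i ≤ m)]
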